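/- For every β ∈ ℝ and every r ∈ (0,1), the radial derivatives of f_β satisfy (d/dr) f_β(r) = (cos(β/2)(1 + r^{n−2}) + i·sin(β/2)(1 − r^{n−2})) / √(1 − r^{2n}) and (d/dr) f_β(r e^{iπ/n}) = e^{iπ/n} · (cos(β/2)(1 − r^{n−2}) + i·sin(β/2)(1 + r^{n−2})) / √(1 − r^{2n}). Moreover, for β ∈ (0, π/2], the functions r ↦ |f_β(r)| and r ↦ |f_β(r e^{iπ/n})| are strictly increasing on (0,1]. -/

import Mathlib

open Real

noncomputable def A (m : ℕ) : ℝ := (Nat.centralBinom m : ℝ) / 4 ^ m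

noncomputable def c (n m : ℕ) : ℝ := A m / (2 * m * n + 1)

noncomputable def d (n m : ℕ) : ℝ := A m * ((n : ℝ) - 1) / ((n : ℝ) * (2 * m + 1) - 1)

noncomputable def H (n : ℕ) (z : ℂ) : ℂ := ∑' m : ℕ, (c n m : ℂ) * z ^ m

noncomputable def G (n : ℕ) (z : ℂ) : ℂ := ∑' m : ℕ, (d n m : ℂ) * z ^ m

noncomputable def hh (n : ℕ) (z : ℂ) : ℂ := ∑' m : ℕ, (c n m : ℂ) * z ^ (2 * m * n + 1)

noncomputable def gg (n : ℕ) (z : ℂ) : ℂ :=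
  (1 / ((n : ℂ) - 1)) * ∑' m : ℕ, (d n m : ℂ) * z ^ (2 * m * n + n - 1)

noncomputable def f (n : ℕ) (β : ℝ) (z : ℂ) : ℂ :=
  Complex.exp (Complex.I * β / 2) * hh n z +
    Complex.exp (-(Complex.I * β / 2)) * (starRingEnd ℂ) (gg n z)

noncomputable def K (n : ℕ) : ℝ :=
  Real.sqrt π * Real.Gamma (1 + 1 / (2 * n)) / Real.Gamma (1 / 2 + 1 / (2 * n))


lemma A_nonneg (m : ℕ) : 0 ≤ A m := by unfold A; positivity

lemma A_zero : A 0 = 1 := by simp [A, Nat.centralBinom]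

lemma A_succ (m : ℕ) : A (m + 1) = A m * ((2 * m + 1) / (2 * m + 2)) := by
  have h : ((m : ℝ) + 1) * (Nat.centralBinom (m + 1) : ℝ)
      = 2 * (2 * m + 1) * (Nat.centralBinom m : ℝ) := by
    exact_mod_cast congrArg (Nat.cast (R := ℝ)) (Nat.succ_mul_centralBinom_succ m)
  have hm : ((m : ℝ) + 1) ≠ 0 := by positivity
  unfold A
  rw [pow_succ]
  field_simp
  nlinarith [h, pow_pos (show (0:ℝ)<4 by norm_num) m]

lemma A_le_one (m : ℕ) : A m ≤ 1 := by
  induction m with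
  | zero => simp [A_zero]
  | succ k ih =>
    rw [A_succ]
    have h1 : (2 * (k:ℝ) + 1) / (2 * k + 2) ≤ 1 := by
      rw [div_le_one (by positivity)]; linarith
    have := mul_le_one₀ ih (by positivity : (0:ℝ) ≤ (2 * (k:ℝ) + 1) / (2 * k + 2)) h1
    exact this

lemma A_sq (m : ℕ) : A m ^ 2 * (2 * m + 1) ≤ 1 := by
  induction m with
  | zero => simp [A_zero]
  | succ k ih =>
    rw [A_succ]
    have hk : (0:ℝ) < 2 * k + 2 := by positivity
    have key : (2*(k:ℝ)+1) * (2*k+3) ≤ (2*k+2)^2 := by nlinarith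
    have hA := A_nonneg k
    push_cast
    rw [mul_pow, div_pow]
    rw [show A k ^ 2 * ((2 * (k:ℝ) + 1) ^ 2 / (2 * k + 2) ^ 2) * (2 * (k + 1) + 1)
        = A k ^ 2 * (2 * (k:ℝ) + 1) ^ 2 * (2 * k + 3) / (2 * k + 2) ^ 2 by ring]
    rw [div_le_one (by positivity)]
    nlinarith [sq_nonneg (A k), mul_nonneg (sq_nonneg (A k)) (le_of_lt hk)]

lemma A_le_inv_sqrt (m : ℕ) : A m ≤ Real.sqrt (1 / (2 * m + 1)) := by
  rw [Real.le_sqrt (A_nonneg m) (by positivity), le_div_iff₀ (by positivity)]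
  exact A_sq m

lemma A_div_bound (m k : ℕ) (hk : 2 * m + 1 ≤ k) :
    A m / k ≤ 1 / Real.sqrt (((m : ℝ) + 1) ^ 3) := by
  have hm1 : (0:ℝ) < (m:ℝ) + 1 := by positivity
  have h2m : ((m:ℝ) + 1) ≤ 2 * m + 1 := by push_cast; linarith [Nat.cast_nonneg (α := ℝ) m]
  have hkR : ((m:ℝ) + 1) ≤ (k : ℝ) := by
    calc ((m:ℝ) + 1) ≤ 2 * m + 1 := h2m
      _ ≤ k := by exact_mod_cast hk
  have h1 : A m ≤ Real.sqrt (1 / ((m:ℝ) + 1)) := by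
    refine (A_le_inv_sqrt m).trans (Real.sqrt_le_sqrt ?_)
    apply one_div_le_one_div_of_le hm1 h2m
  have h2 : A m / k ≤ Real.sqrt (1 / ((m:ℝ) + 1)) * (1 / ((m:ℝ) + 1)) := by
    rw [div_eq_mul_one_div]
    apply mul_le_mul h1 _ (by positivity) (Real.sqrt_nonneg _)
    apply one_div_le_one_div_of_le hm1 hkR
  refine h2.trans (le_of_eq ?_)
  simp only [one_div]
  calc Real.sqrt ((((m:ℝ)+1))⁻¹) * (((m:ℝ)+1))⁻¹
      = Real.sqrt ((((m:ℝ)+1))⁻¹) * Real.sqrt (((((m:ℝ)+1))⁻¹)^2) := by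
        rw [Real.sqrt_sq (by positivity)]
    _ = Real.sqrt ((((m:ℝ)+1))⁻¹ * ((((m:ℝ)+1))⁻¹)^2) := (Real.sqrt_mul (by positivity) _).symm
    _ = Real.sqrt ((((m:ℝ)+1)^3)⁻¹) := by congr 1; field_simp
    _ = (Real.sqrt (((m:ℝ)+1)^3))⁻¹ := Real.sqrt_inv _

lemma summable_inv_sqrt_cube : Summable (fun m : ℕ => 1 / Real.sqrt (((m : ℝ) + 1) ^ 3)) := by
  have h : Summable (fun m : ℕ => ((m : ℝ)) ^ (-(3/2) : ℝ)) :=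
    Real.summable_nat_rpow.mpr (by norm_num)
  have h2 := h.comp_injective Nat.succ_injective
  refine h2.congr fun m => ?_
  simp only [Function.comp]
  have hm : (0:ℝ) < (m:ℝ) + 1 := by positivity
  rw [show ((Nat.succ m : ℕ) : ℝ) = (m:ℝ) + 1 by push_cast; ring]
  rw [Real.rpow_neg hm.le, Real.sqrt_eq_rpow, ← Real.rpow_natCast ((m:ℝ)+1) 3,
    ← Real.rpow_mul hm.le]
  norm_num

lemma summable_A_div (k e : ℕ → ℕ) (hk : ∀ m, 2 * m + 1 ≤ k m) {r : ℝ}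
    (h0 : 0 ≤ r) (h1 : r ≤ 1) : Summable (fun m => A m / (k m) * r ^ (e m)) := by
  refine Summable.of_nonneg_of_le
    (fun m => mul_nonneg (div_nonneg (A_nonneg m) (Nat.cast_nonneg _)) (pow_nonneg h0 _))
    (fun m => ?_) summable_inv_sqrt_cube
  calc A m / k m * r ^ e m ≤ A m / k m * 1 := by
        apply mul_le_mul_of_nonneg_left (pow_le_one₀ h0 h1)
          (div_nonneg (A_nonneg m) (Nat.cast_nonneg _))
    _ = A m / k m := mul_one _
    _ ≤ _ := A_div_bound m (k m) (hk m)

noncomputable def F (x : ℝ) : ℝ := ∑' m : ℕ, A m * x ^ m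

lemma summable_F {x : ℝ} (hx : |x| < 1) : Summable (fun m : ℕ => A m * x ^ m) := by
  refine Summable.of_norm_bounded (summable_geometric_of_lt_one (abs_nonneg x) hx) fun m => ?_
  rw [norm_mul, norm_pow, Real.norm_eq_abs, Real.norm_eq_abs, abs_of_nonneg (A_nonneg m)]
  exact mul_le_of_le_one_left (by positivity) (A_le_one m)

noncomputable def D (x : ℝ) : ℝ := ∑' m : ℕ, ((m : ℝ) + 1) * A (m + 1) * x ^ m

lemma summable_mul_geom {x : ℝ} (hx : |x| < 1) (C : ℕ → ℝ) (hC : ∀ m, |C m| ≤ 2 * m + 2) :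
    Summable (fun m : ℕ => C m * x ^ m) := by
  have h1 : Summable (fun m : ℕ => (m : ℝ) * |x| ^ m) := by
    simpa using summable_pow_mul_geometric_of_norm_lt_one 1
      (by rwa [Real.norm_eq_abs, abs_abs])
  have h2 : Summable (fun m : ℕ => 2 * ((m : ℝ) * |x| ^ m) + 2 * |x| ^ m) :=
    (h1.mul_left 2).add ((summable_geometric_of_lt_one (abs_nonneg x) hx).mul_left 2)
  refine Summable.of_norm_bounded h2 fun m => ?_
  rw [norm_mul, norm_pow, Real.norm_eq_abs, Real.norm_eq_abs]
  have := hC m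
  have h3 : (0:ℝ) ≤ |x| ^ m := by positivity
  nlinarith [abs_nonneg (C m)]

lemma F_hasDerivAt {x : ℝ} (hx : |x| < 1) : HasDerivAt F (D x) x := by
  set b : ℝ := (1 + |x|) / 2 with hb
  have hxb : |x| < b := by rw [hb]; linarith
  have hb1 : b < 1 := by rw [hb]; linarith
  have hb0 : 0 ≤ b := le_trans (abs_nonneg x) hxb.le
  have hu : Summable (fun m : ℕ => ((m : ℝ) + 1) * b ^ m) := by
    have h1 : Summable (fun m : ℕ => (m : ℝ) * b ^ m) := by
      simpa using summable_pow_mul_geometric_of_norm_lt_one 1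
        (by rwa [Real.norm_eq_abs, abs_of_nonneg hb0])
    simpa [add_mul, one_mul] using h1.add (summable_geometric_of_lt_one hb0 hb1)
  have main : HasDerivAt (fun y : ℝ => ∑' m : ℕ, A (m + 1) * y ^ (m + 1))
      (∑' m : ℕ, A (m + 1) * (((m : ℝ) + 1) * x ^ m)) x := by
    refine hasDerivAt_tsum_of_isPreconnected
      (g := fun (m : ℕ) (y : ℝ) => A (m + 1) * y ^ (m + 1))
      (g' := fun (m : ℕ) (y : ℝ) => A (m + 1) * (((m : ℝ) + 1) * y ^ m))
      (y₀ := 0) hu isOpen_Ioo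
      (convex_Ioo (-b) b).isPreconnected
      (fun m y _ => ?_) (fun m y hy => ?_) ?_ ?_ ?_
    · simpa using (hasDerivAt_pow (m + 1) y).const_mul (A (m + 1))
    · rw [Real.norm_eq_abs, abs_mul, abs_mul, abs_of_nonneg (A_nonneg _),
        abs_of_nonneg (by positivity : (0:ℝ) ≤ (m:ℝ) + 1), abs_pow]
      have hyb : |y| ≤ b := by
        rw [abs_le]; exact ⟨hy.1.le, hy.2.le⟩
      calc A (m+1) * (((m:ℝ)+1) * |y| ^ m) ≤ 1 * (((m:ℝ)+1) * b ^ m) := by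
            apply mul_le_mul (A_le_one _) _ (by positivity) (by norm_num)
            exact mul_le_mul_of_nonneg_left (pow_le_pow_left₀ (abs_nonneg y) hyb m)
              (by positivity)
        _ = ((m:ℝ)+1) * b ^ m := one_mul _
    · exact ⟨by linarith [abs_nonneg x, hxb], by linarith [abs_nonneg x]⟩
    · refine summable_zero.congr fun m => ?_
      simp
    · exact ⟨neg_lt_of_abs_lt hxb, lt_of_abs_lt hxb⟩
  have hF : ∀ y ∈ Set.Ioo (-1 : ℝ) 1, F y = A 0 + ∑' m : ℕ, A (m + 1) * y ^ (m + 1) := by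
    intro y hy
    have hs : Summable (fun m : ℕ => A m * y ^ m) :=
      summable_F (abs_lt.2 ⟨hy.1, hy.2⟩)
    rw [F, Summable.tsum_eq_zero_add hs]
    simp
  have h2 : HasDerivAt (fun y : ℝ => A 0 + ∑' m : ℕ, A (m + 1) * y ^ (m + 1))
      (∑' m : ℕ, A (m + 1) * (((m : ℝ) + 1) * x ^ m)) x := main.const_add _
  have h3 : HasDerivAt F (∑' m : ℕ, A (m + 1) * (((m : ℝ) + 1) * x ^ m)) x := by
    refine h2.congr_of_eventuallyEq ?_
    filter_upwards [Ioo_mem_nhds (neg_lt_of_abs_lt hx) (lt_of_abs_lt hx)] with y hy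
    exact hF y hy
  refine h3.congr_deriv ?_
  rw [D]
  exact tsum_congr fun m => by ring

lemma two_term (m : ℕ) : 2 * ((m : ℝ) + 1) * A (m + 1) = (2 * m + 1) * A m := by
  rw [A_succ]
  have h : (2 * (m:ℝ) + 2) ≠ 0 := by positivity
  field_simp

lemma D_eq {x : ℝ} (hx : |x| < 1) : 2 * (1 - x) * D x = F x := by
  have hP : Summable (fun m : ℕ => (m : ℝ) * A m * x ^ m) := by
    refine summable_mul_geom hx _ fun m => ?_
    rw [abs_mul, abs_of_nonneg (A_nonneg m), abs_of_nonneg (Nat.cast_nonneg m)]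
    nlinarith [A_le_one m, A_nonneg m, Nat.cast_nonneg (α := ℝ) m]
  have hFs : Summable (fun m : ℕ => A m * x ^ m) := summable_F hx
  have h1 : 2 * D x = 2 * ∑' m : ℕ, (m : ℝ) * A m * x ^ m + F x := by
    rw [D, ← tsum_mul_left]
    rw [show (2 : ℝ) * ∑' m : ℕ, (m : ℝ) * A m * x ^ m = ∑' m : ℕ, 2 * ((m : ℝ) * A m * x ^ m)
      from (tsum_mul_left).symm]
    rw [F, ← Summable.tsum_add (hP.mul_left 2) hFs]
    exact tsum_congr fun m => by
      rw [show 2 * (((m:ℝ)+1) * A (m+1) * x ^ m) = (2 * ((m : ℝ) + 1) * A (m + 1)) * x ^ m by ring,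
        two_term]
      ring
  have h2 : x * D x = ∑' m : ℕ, (m : ℝ) * A m * x ^ m := by
    rw [D, ← tsum_mul_left]
    have e1 : ∀ m : ℕ, x * (((m:ℝ) + 1) * A (m + 1) * x ^ m)
        = ((m : ℝ) + 1) * A (m + 1) * x ^ (m + 1) := fun m => by ring
    rw [tsum_congr e1]
    have h3 := Summable.tsum_eq_zero_add hP
    simp only [Nat.cast_zero, zero_mul, pow_zero, mul_one, zero_add] at h3
    exact (tsum_congr (fun m => by push_cast; ring)).trans h3.symm
  nlinarith [h1, h2]

lemma F_zero : F 0 = 1 := by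
  rw [F, tsum_eq_single 0 (fun m hm => by simp [zero_pow hm])]
  simp [A_zero]

lemma F_eq {x : ℝ} (h0 : 0 ≤ x) (h1 : x < 1) : F x = 1 / Real.sqrt (1 - x) := by
  have key : ∀ y ∈ Set.Icc (0:ℝ) x, HasDerivAt (fun t => Real.sqrt (1 - t) * F t) 0 y := by
    intro y hy
    have hy0 : 0 ≤ y := hy.1
    have hy1 : y < 1 := lt_of_le_of_lt hy.2 h1
    have hyabs : |y| < 1 := abs_lt.2 ⟨by linarith, hy1⟩
    have hne : (1 : ℝ) - y ≠ 0 := by linarith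
    have hspos : 0 < Real.sqrt (1 - y) := Real.sqrt_pos.2 (by linarith)
    have hsq : Real.sqrt (1 - y) ^ 2 = 1 - y := Real.sq_sqrt (by linarith)
    have hder1 : HasDerivAt (fun t : ℝ => Real.sqrt (1 - t)) (1 / (2 * Real.sqrt (1 - y)) * (-1)) y := by
      have h := (Real.hasDerivAt_sqrt hne).comp y (((hasDerivAt_id y).const_sub 1).congr_deriv rfl)
      exact h
    have hder2 := F_hasDerivAt hyabs
    have hprod := hder1.mul hder2
    refine hprod.congr_deriv ?_
    have hDval : 2 * (1 - y) * D y = F y := D_eq hyabs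
    have hkey : Real.sqrt (1 - y) * D y = F y / (2 * Real.sqrt (1 - y)) := by
      rw [eq_div_iff (by positivity)]
      linear_combination hDval + 2 * D y * hsq
    rw [hkey]
    field_simp
    ring
  have hcal := constant_of_has_deriv_right_zero
    (f := fun t => Real.sqrt (1 - t) * F t) (a := 0) (b := x)
    (fun y hy => ((key y hy).continuousAt).continuousWithinAt)
    (fun y hy => ((key y ⟨hy.1, hy.2.le⟩).hasDerivWithinAt))
    x ⟨h0, le_refl x⟩
  simp only [sub_zero, Real.sqrt_one, one_mul, F_zero, mul_one] at hcal
  have hspos : 0 < Real.sqrt (1 - x) := Real.sqrt_pos.2 (by linarith)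
  rw [eq_div_iff hspos.ne']
  linear_combination hcal

lemma term_hasDerivAt (n t m : ℕ) (ht : 1 ≤ t) (y : ℝ) :
    HasDerivAt (fun y : ℝ => A m / ((2*m*n + t : ℕ) : ℝ) * y ^ (2*m*n + t))
      (A m * ((y ^ (2*n)) ^ m * y ^ (t-1))) y := by
  obtain ⟨t', rfl⟩ : ∃ t', t = t' + 1 := ⟨t - 1, by omega⟩
  have hk : ((2*m*n + (t'+1) : ℕ) : ℝ) ≠ 0 := by positivity
  have h := (hasDerivAt_pow (2*m*n + (t'+1)) y).const_mul (A m / ((2*m*n + (t'+1) : ℕ) : ℝ))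
  refine h.congr_deriv ?_
  rw [show 2*m*n + (t'+1) - 1 = 2*m*n + t' from by omega]
  rw [show (t' + 1) - 1 = t' from by omega]
  rw [pow_add, show 2*m*n = (2*n)*m from by ring, pow_mul]
  field_simp

lemma hasDerivAt_tsum_Apow (n t : ℕ) (hn : 1 ≤ n) (ht : 1 ≤ t) {r : ℝ}
    (h0 : -1 < r) (h1 : r < 1) :
    HasDerivAt (fun y : ℝ => ∑' m : ℕ, A m / ((2*m*n + t : ℕ) : ℝ) * y ^ (2*m*n + t))
      (r ^ (t - 1) * F (r ^ (2*n))) r := by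
  have hrabs : |r| < 1 := abs_lt.2 ⟨h0, h1⟩
  set b : ℝ := (1 + |r|) / 2 with hb
  have hxb : |r| < b := by rw [hb]; linarith
  have hb1 : b < 1 := by rw [hb]; linarith
  have hb0 : 0 ≤ b := le_trans (abs_nonneg r) hxb.le
  have hbn : b ^ (2*n) < 1 := pow_lt_one₀ hb0 hb1 (by omega)
  have hu : Summable (fun m : ℕ => (b ^ (2*n)) ^ m) :=
    summable_geometric_of_lt_one (by positivity) hbn
  have main : HasDerivAt (fun y : ℝ => ∑' m : ℕ, A m / ((2*m*n + t : ℕ) : ℝ) * y ^ (2*m*n + t))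
      (∑' m : ℕ, A m * ((r ^ (2*n)) ^ m * r ^ (t-1))) r := by
    refine hasDerivAt_tsum_of_isPreconnected
      (g := fun (m : ℕ) (y : ℝ) => A m / ((2*m*n + t : ℕ) : ℝ) * y ^ (2*m*n + t))
      (g' := fun (m : ℕ) (y : ℝ) => A m * ((y ^ (2*n)) ^ m * y ^ (t-1)))
      (y₀ := 0) hu isOpen_Ioo (convex_Ioo (-b) b).isPreconnected
      (fun m y _ => term_hasDerivAt n t m ht y) (fun m y hy => ?_) ?_ ?_ ?_
    · have hyb : |y| ≤ b := by rw [abs_le]; exact ⟨hy.1.le, hy.2.le⟩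
      rw [Real.norm_eq_abs, abs_mul, abs_mul, abs_pow, abs_pow, abs_pow,
        abs_of_nonneg (A_nonneg m)]
      calc A m * ((|y| ^ (2*n)) ^ m * |y| ^ (t-1)) ≤ 1 * ((b ^ (2*n)) ^ m * 1) := by
            apply mul_le_mul (A_le_one m) _ (by positivity) one_pos.le
            apply mul_le_mul _ (pow_le_one₀ (abs_nonneg y) (hyb.trans hb1.le)) (by positivity)
              (by positivity)
            exact pow_le_pow_left₀ (by positivity) (pow_le_pow_left₀ (abs_nonneg y) hyb _) m
        _ = (b ^ (2*n)) ^ m := by ring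
    · exact ⟨by linarith [abs_nonneg r], by linarith [abs_nonneg r]⟩
    · refine summable_zero.congr fun m => ?_
      rw [zero_pow (show 2*m*n + t ≠ 0 from by omega), mul_zero]
    · exact ⟨neg_lt_of_abs_lt hxb, lt_of_abs_lt hxb⟩
  refine main.congr_deriv ?_
  rw [show ∑' m : ℕ, A m * ((r ^ (2*n)) ^ m * r ^ (t-1))
      = ∑' m : ℕ, (A m * (r ^ (2*n)) ^ m) * r ^ (t-1) from tsum_congr fun m => by ring,
    tsum_mul_right, F, mul_comm]

noncomputable def hrf (n : ℕ) (r : ℝ) : ℝ :=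
  ∑' m : ℕ, A m / ((2*m*n + 1 : ℕ) : ℝ) * r ^ (2*m*n + 1)

noncomputable def grf (n : ℕ) (r : ℝ) : ℝ :=
  ∑' m : ℕ, A m / ((2*m*n + n - 1 : ℕ) : ℝ) * r ^ (2*m*n + n - 1)

lemma grf_eq (n : ℕ) (hn : 3 ≤ n) (r : ℝ) :
    grf n r = ∑' m : ℕ, A m / ((2*m*n + (n-1) : ℕ) : ℝ) * r ^ (2*m*n + (n-1)) := by
  unfold grf
  exact tsum_congr fun m => by rw [Nat.add_sub_assoc (by omega) (2*m*n)]

lemma hrf_hasDerivAt (n : ℕ) (hn : 3 ≤ n) {r : ℝ} (h0 : 0 ≤ r) (h1 : r < 1) :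
    HasDerivAt (hrf n) (1 / Real.sqrt (1 - r ^ (2*n))) r := by
  have h := hasDerivAt_tsum_Apow n 1 (by omega) le_rfl (by linarith) h1
  refine h.congr_deriv ?_
  have hp0 : 0 ≤ r ^ (2*n) := by positivity
  have hp1 : r ^ (2*n) < 1 := pow_lt_one₀ h0 h1 (by omega)
  rw [F_eq hp0 hp1]
  simp

lemma grf_hasDerivAt (n : ℕ) (hn : 3 ≤ n) {r : ℝ} (h0 : 0 ≤ r) (h1 : r < 1) :
    HasDerivAt (grf n) (r ^ (n-2) / Real.sqrt (1 - r ^ (2*n))) r := by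
  have h := hasDerivAt_tsum_Apow n (n-1) (by omega) (by omega) (by linarith) h1
  have hfun : grf n = fun y : ℝ => ∑' m : ℕ, A m / ((2*m*n + (n-1) : ℕ) : ℝ) * y ^ (2*m*n + (n-1)) := by
    funext y; exact grf_eq n hn y
  rw [hfun]
  refine h.congr_deriv ?_
  have hp0 : 0 ≤ r ^ (2*n) := by positivity
  have hp1 : r ^ (2*n) < 1 := pow_lt_one₀ h0 h1 (by omega)
  rw [F_eq hp0 hp1, show n - 1 - 1 = n - 2 from by omega]
  ring






lemma c_eq (n m : ℕ) : c n m = A m / ((2*m*n + 1 : ℕ) : ℝ) := by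
  unfold c; push_cast; ring_nf

lemma d_eq (n m : ℕ) (hn : 3 ≤ n) :
    (1 / ((n : ℝ) - 1)) * d n m = A m / ((2*m*n + n - 1 : ℕ) : ℝ) := by
  unfold d
  have h1 : ((2*m*n + n - 1 : ℕ) : ℝ) = (n : ℝ) * (2 * m + 1) - 1 := by
    have : (1:ℕ) ≤ 2*m*n + n := by
      have : 1 ≤ n := by omega
      calc (1:ℕ) ≤ n := this
        _ ≤ 2*m*n + n := Nat.le_add_left n (2*m*n)
    rw [Nat.cast_sub this]
    push_cast; ring
  rw [h1]
  have hne : (n : ℝ) - 1 ≠ 0 := by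
    have : (3:ℝ) ≤ (n:ℝ) := by exact_mod_cast hn
    intro h; nlinarith
  have hne2 : (n : ℝ) * (2 * m + 1) - 1 ≠ 0 := by
    have h3 : (3:ℝ) ≤ (n:ℝ) := by exact_mod_cast hn
    have hm : (0:ℝ) ≤ (m:ℝ) := Nat.cast_nonneg m
    intro h; nlinarith
  field_simp

lemma w_pow_exp (n : ℕ) (hn : 3 ≤ n) :
    (Complex.exp (Complex.I * ((π / n : ℝ) : ℂ))) ^ (2*n) = 1 := by
  rw [← Complex.exp_nat_mul]
  have hne : (n : ℂ) ≠ 0 := Nat.cast_ne_zero.2 (by omega)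
  have : ((2*n : ℕ) : ℂ) * (Complex.I * ((π / n : ℝ) : ℂ)) = 2 * π * Complex.I := by
    push_cast
    field_simp
  rw [this, Complex.exp_two_pi_mul_I]

lemma w_conj_pow (n : ℕ) (hn : 3 ≤ n) :
    (starRingEnd ℂ) ((Complex.exp (Complex.I * ((π / n : ℝ) : ℂ))) ^ (n-1))
      = -Complex.exp (Complex.I * ((π / n : ℝ) : ℂ)) := by
  rw [map_pow, ← Complex.exp_conj]
  have h1 : (starRingEnd ℂ) (Complex.I * ((π / n : ℝ) : ℂ)) = -(Complex.I * ((π / n : ℝ) : ℂ)) := by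
    simp [Complex.conj_I]
  rw [h1, ← Complex.exp_nat_mul]
  have hne : (n : ℂ) ≠ 0 := Nat.cast_ne_zero.2 (by omega)
  have h2 : ((n - 1 : ℕ) : ℂ) * -(Complex.I * ((π / n : ℝ) : ℂ))
      = Complex.I * ((π / n : ℝ) : ℂ) + -(π * Complex.I) := by
    rw [Nat.cast_sub (by omega : 1 ≤ n)]
    push_cast
    field_simp
    ring
  rw [h2, Complex.exp_add, Complex.exp_neg, Complex.exp_pi_mul_I]
  push_cast
  norm_num

lemma hh_eq (n : ℕ) (hn : 3 ≤ n) (w : ℂ) (hw : w ^ (2*n) = 1) (r : ℝ) :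
    hh n ((r : ℂ) * w) = w * ((hrf n r : ℝ) : ℂ) := by
  unfold hh hrf
  rw [Complex.ofReal_tsum, ← tsum_mul_left]
  refine tsum_congr fun m => ?_
  have hw1 : w ^ (2*m*n + 1) = w := by
    rw [pow_add, show 2*m*n = (2*n)*m from by ring, pow_mul, hw, one_pow, one_mul, pow_one]
  rw [mul_pow, hw1, c_eq]
  push_cast
  ring

lemma gg_eq (n : ℕ) (hn : 3 ≤ n) (w : ℂ) (hw : w ^ (2*n) = 1) (r : ℝ) :
    gg n ((r : ℂ) * w) = w ^ (n-1) * ((grf n r : ℝ) : ℂ) := by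
  unfold gg
  rw [grf_eq n hn, Complex.ofReal_tsum, ← tsum_mul_left, ← tsum_mul_left]
  refine tsum_congr fun m => ?_
  have he : 2*m*n + n - 1 = 2*m*n + (n-1) := Nat.add_sub_assoc (by omega) (2*m*n)
  have hw1 : w ^ (2*m*n + n - 1) = w ^ (n-1) := by
    rw [he, pow_add, show 2*m*n = (2*n)*m from by ring, pow_mul, hw, one_pow, one_mul]
  have hd : ((1 / ((n : ℝ) - 1)) * d n m : ℝ) = A m / ((2*m*n + (n-1) : ℕ) : ℝ) := by
    rw [← he]; exact d_eq n m hn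
  calc (1 / ((n : ℂ) - 1)) * (((d n m : ℝ) : ℂ) * ((r : ℂ) * w) ^ (2*m*n + n - 1))
      = (((1 / ((n : ℝ) - 1)) * d n m : ℝ) : ℂ) * ((r : ℝ) ^ (2*m*n + (n-1)) : ℝ) * w ^ (n-1) := by
        rw [mul_pow, hw1, ← he]
        push_cast
        ring
    _ = w ^ (n-1) * ((A m / ((2*m*n + (n-1) : ℕ) : ℝ) * r ^ (2*m*n + (n-1)) : ℝ) : ℂ) := by
        rw [hd]; push_cast; ring

lemma E1 (β : ℝ) : Complex.exp (Complex.I * (β : ℂ) / 2)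
    = ((Real.cos (β/2) : ℝ) : ℂ) + ((Real.sin (β/2) : ℝ) : ℂ) * Complex.I := by
  have h : Complex.I * (β : ℂ) / 2 = ((β/2 : ℝ) : ℂ) * Complex.I := by push_cast; ring
  rw [h, Complex.exp_mul_I, ← Complex.ofReal_cos, ← Complex.ofReal_sin]

lemma E2 (β : ℝ) : Complex.exp (-(Complex.I * (β : ℂ) / 2))
    = ((Real.cos (β/2) : ℝ) : ℂ) - ((Real.sin (β/2) : ℝ) : ℂ) * Complex.I := by
  have h : -(Complex.I * (β : ℂ) / 2) = ((-(β/2) : ℝ) : ℂ) * Complex.I := by push_cast; ring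
  rw [h, Complex.exp_mul_I, ← Complex.ofReal_cos, ← Complex.ofReal_sin]
  rw [Real.cos_neg, Real.sin_neg]
  push_cast
  ring

lemma f_one (n : ℕ) (hn : 3 ≤ n) (β r : ℝ) :
    f n β (r : ℂ) = ((Real.cos (β/2) * (hrf n r + grf n r) : ℝ) : ℂ)
      + ((Real.sin (β/2) * (hrf n r - grf n r) : ℝ) : ℂ) * Complex.I := by
  have h1 : hh n (r : ℂ) = ((hrf n r : ℝ) : ℂ) := by
    have := hh_eq n hn 1 (one_pow _) r
    simpa using this
  have h2 : gg n (r : ℂ) = ((grf n r : ℝ) : ℂ) := by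
    have := gg_eq n hn 1 (one_pow _) r
    simpa using this
  unfold f
  rw [h1, h2, Complex.conj_ofReal, E1, E2]
  push_cast
  ring

lemma f_rot' (n : ℕ) (hn : 3 ≤ n) (β r : ℝ) (w : ℂ) (hw : w ^ (2*n) = 1)
    (hwc : (starRingEnd ℂ) (w ^ (n-1)) = -w) :
    f n β ((r : ℂ) * w)
      = w * (((Real.cos (β/2) * (hrf n r - grf n r) : ℝ) : ℂ)
          + ((Real.sin (β/2) * (hrf n r + grf n r) : ℝ) : ℂ) * Complex.I) := by
  have h1 := hh_eq n hn w hw r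
  have h2 := gg_eq n hn w hw r
  unfold f
  rw [h1, h2, map_mul, hwc, Complex.conj_ofReal, E1, E2]
  push_cast
  ring

lemma f_rot (n : ℕ) (hn : 3 ≤ n) (β r : ℝ) :
    f n β ((r : ℂ) * Complex.exp (Complex.I * ((π / n : ℝ) : ℂ)))
      = Complex.exp (Complex.I * ((π / n : ℝ) : ℂ)) *
        (((Real.cos (β/2) * (hrf n r - grf n r) : ℝ) : ℂ)
          + ((Real.sin (β/2) * (hrf n r + grf n r) : ℝ) : ℂ) * Complex.I) :=
  f_rot' n hn β r _ (w_pow_exp n hn) (w_conj_pow n hn)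

lemma sqrt_pos_of (n : ℕ) (hn : 3 ≤ n) {r : ℝ} (h0 : 0 ≤ r) (h1 : r < 1) :
    0 < Real.sqrt (1 - r ^ (2*n)) :=
  Real.sqrt_pos.2 (sub_pos.2 (pow_lt_one₀ h0 h1 (by omega)))

lemma deriv_one_f (n : ℕ) (hn : 3 ≤ n) (β : ℝ) {r : ℝ} (h0 : 0 ≤ r) (h1 : r < 1) :
    HasDerivAt (fun r : ℝ => f n β (r : ℂ))
      ((((Real.cos (β / 2) * (1 + r ^ (n - 2)) : ℝ) : ℂ) +
          Complex.I * ((Real.sin (β / 2) * (1 - r ^ (n - 2)) : ℝ) : ℂ)) /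
        ((Real.sqrt (1 - r ^ (2 * n)) : ℝ) : ℂ)) r := by
  have hs : 0 < Real.sqrt (1 - r ^ (2*n)) := sqrt_pos_of n hn h0 h1
  have hH := ((hrf_hasDerivAt n hn h0 h1).ofReal_comp).const_mul
    (Complex.exp (Complex.I * (β : ℂ) / 2))
  have hG := ((grf_hasDerivAt n hn h0 h1).ofReal_comp).const_mul
    (Complex.exp (-(Complex.I * (β : ℂ) / 2)))
  have hfun : (fun r : ℝ => f n β (r : ℂ))
      = fun r : ℝ => Complex.exp (Complex.I * (β : ℂ) / 2) * ((hrf n r : ℝ) : ℂ)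
        + Complex.exp (-(Complex.I * (β : ℂ) / 2)) * ((grf n r : ℝ) : ℂ) := by
    funext y
    have h1' : hh n (y : ℂ) = ((hrf n y : ℝ) : ℂ) := by simpa using hh_eq n hn 1 (one_pow _) y
    have h2' : gg n (y : ℂ) = ((grf n y : ℝ) : ℂ) := by simpa using gg_eq n hn 1 (one_pow _) y
    unfold f
    rw [h1', h2', Complex.conj_ofReal]
  rw [hfun]
  refine (hH.add hG).congr_deriv ?_
  rw [E1, E2]
  have hsne : ((Real.sqrt (1 - r ^ (2*n)) : ℝ) : ℂ) ≠ 0 := by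
    exact_mod_cast Complex.ofReal_ne_zero.2 hs.ne'
  push_cast
  field_simp
  ring

lemma deriv_rot' (n : ℕ) (hn : 3 ≤ n) (β : ℝ) (w : ℂ) (hw : w ^ (2*n) = 1)
    (hwc : (starRingEnd ℂ) (w ^ (n-1)) = -w) {r : ℝ} (h0 : 0 ≤ r) (h1 : r < 1) :
    HasDerivAt (fun r : ℝ => f n β ((r : ℂ) * w))
      (w * ((((Real.cos (β / 2) * (1 - r ^ (n - 2)) : ℝ) : ℂ) +
            Complex.I * ((Real.sin (β / 2) * (1 + r ^ (n - 2)) : ℝ) : ℂ)) /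
          ((Real.sqrt (1 - r ^ (2 * n)) : ℝ) : ℂ))) r := by
  have hs : 0 < Real.sqrt (1 - r ^ (2*n)) := sqrt_pos_of n hn h0 h1
  have hH := (((hrf_hasDerivAt n hn h0 h1).ofReal_comp).const_mul w).const_mul
    (Complex.exp (Complex.I * (β : ℂ) / 2))
  have hG := (((grf_hasDerivAt n hn h0 h1).ofReal_comp).const_mul (-w)).const_mul
    (Complex.exp (-(Complex.I * (β : ℂ) / 2)))
  have hfun : (fun r : ℝ => f n β ((r : ℂ) * w))
      = fun r : ℝ => Complex.exp (Complex.I * (β : ℂ) / 2) * (w * ((hrf n r : ℝ) : ℂ))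
        + Complex.exp (-(Complex.I * (β : ℂ) / 2)) * (-w * ((grf n r : ℝ) : ℂ)) := by
    funext y
    unfold f
    rw [hh_eq n hn w hw y, gg_eq n hn w hw y, map_mul, hwc, Complex.conj_ofReal]
  rw [hfun]
  refine (hH.add hG).congr_deriv ?_
  rw [E1, E2]
  have hsne : ((Real.sqrt (1 - r ^ (2*n)) : ℝ) : ℂ) ≠ 0 := by
    exact_mod_cast Complex.ofReal_ne_zero.2 hs.ne'
  push_cast
  field_simp
  ring

lemma summable_h (n : ℕ) (hn : 3 ≤ n) {r : ℝ} (h0 : 0 ≤ r) (h1 : r ≤ 1) :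
    Summable (fun m : ℕ => A m / ((2*m*n + 1 : ℕ) : ℝ) * r ^ (2*m*n + 1)) :=
  summable_A_div _ _ (fun m => by nlinarith [Nat.le_mul_of_pos_right (2*m) (show 0 < n by omega)])
    h0 h1

lemma summable_g (n : ℕ) (hn : 3 ≤ n) {r : ℝ} (h0 : 0 ≤ r) (h1 : r ≤ 1) :
    Summable (fun m : ℕ => A m / ((2*m*n + (n-1) : ℕ) : ℝ) * r ^ (2*m*n + (n-1))) :=
  summable_A_div _ _ (fun m => by
    have := Nat.le_mul_of_pos_right (2*m) (show 0 < n by omega)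
    have h3 : 1 ≤ n - 1 := by omega
    nlinarith) h0 h1

lemma hrf_lt (n : ℕ) (hn : 3 ≤ n) {r1 r2 : ℝ} (h0 : 0 ≤ r1) (h12 : r1 < r2) (h2 : r2 ≤ 1) :
    hrf n r1 < hrf n r2 := by
  unfold hrf
  refine Summable.tsum_lt_tsum (i := 0) (fun m => ?_) ?_ (summable_h n hn h0 (by linarith))
    (summable_h n hn (by linarith) h2)
  · exact mul_le_mul_of_nonneg_left (pow_le_pow_left₀ h0 h12.le _)
      (div_nonneg (A_nonneg m) (Nat.cast_nonneg _))
  · norm_num [A_zero]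
    exact h12

lemma grf_le_mono (n : ℕ) (hn : 3 ≤ n) {r1 r2 : ℝ} (h0 : 0 ≤ r1) (h12 : r1 ≤ r2) (h2 : r2 ≤ 1) :
    grf n r1 ≤ grf n r2 := by
  rw [grf_eq n hn, grf_eq n hn]
  refine Summable.tsum_le_tsum (fun m => ?_) (summable_g n hn h0 (by linarith))
    (summable_g n hn (by linarith) h2)
  exact mul_le_mul_of_nonneg_left (pow_le_pow_left₀ h0 h12 _)
    (div_nonneg (A_nonneg m) (Nat.cast_nonneg _))

lemma hrf_nonneg (n : ℕ) (hn : 3 ≤ n) {r : ℝ} (h0 : 0 ≤ r) (h1 : r ≤ 1) : 0 ≤ hrf n r :=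
  tsum_nonneg fun m => mul_nonneg (div_nonneg (A_nonneg m) (Nat.cast_nonneg _)) (pow_nonneg h0 _)

lemma grf_nonneg (n : ℕ) (hn : 3 ≤ n) {r : ℝ} (h0 : 0 ≤ r) (h1 : r ≤ 1) : 0 ≤ grf n r :=
  tsum_nonneg fun m => mul_nonneg (div_nonneg (A_nonneg m) (Nat.cast_nonneg _)) (pow_nonneg h0 _)

lemma grf_le_hrf (n : ℕ) (hn : 3 ≤ n) {r : ℝ} (h0 : 0 ≤ r) (h1 : r ≤ 1) :
    grf n r ≤ hrf n r := by
  rw [grf_eq n hn]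
  unfold hrf
  refine Summable.tsum_le_tsum (fun m => ?_) (summable_g n hn h0 h1) (summable_h n hn h0 h1)
  have hab : 2*m*n + 1 ≤ 2*m*n + (n-1) := Nat.add_le_add_left (by omega) _
  have h1' : ((0:ℕ) : ℝ) < ((2*m*n + 1 : ℕ) : ℝ) := by exact_mod_cast Nat.succ_pos _
  refine mul_le_mul ?_ (pow_le_pow_of_le_one h0 h1 hab) (pow_nonneg h0 _)
    (div_nonneg (A_nonneg m) (Nat.cast_nonneg _))
  apply div_le_div_of_nonneg_left (A_nonneg m) (by exact_mod_cast Nat.succ_pos _)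
  exact_mod_cast hab

lemma phi_mono (n : ℕ) (hn : 3 ≤ n) (m : ℕ) :
    MonotoneOn (fun y : ℝ => A m / ((2*m*n + 1 : ℕ) : ℝ) * y ^ (2*m*n + 1)
      - A m / ((2*m*n + (n-1) : ℕ) : ℝ) * y ^ (2*m*n + (n-1))) (Set.Icc 0 1) := by
  have hder : ∀ y : ℝ, HasDerivAt (fun y : ℝ => A m / ((2*m*n + 1 : ℕ) : ℝ) * y ^ (2*m*n + 1)
      - A m / ((2*m*n + (n-1) : ℕ) : ℝ) * y ^ (2*m*n + (n-1)))
      (A m * ((y ^ (2*n)) ^ m * y ^ (1-1)) - A m * ((y ^ (2*n)) ^ m * y ^ (n-1-1))) y :=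
    fun y => (term_hasDerivAt n 1 m le_rfl y).sub (term_hasDerivAt n (n-1) m (by omega) y)
  refine monotoneOn_of_deriv_nonneg (convex_Icc 0 1)
    (fun y hy => ((hder y).continuousAt).continuousWithinAt)
    (fun y hy => ((hder y).differentiableAt).differentiableWithinAt)
    (fun y hy => ?_)
  rw [interior_Icc] at hy
  rw [(hder y).deriv]
  have hyp : y ^ (n-1-1) ≤ 1 := pow_le_one₀ hy.1.le hy.2.le
  have hP : (0:ℝ) ≤ (y ^ (2*n)) ^ m := pow_nonneg (pow_nonneg hy.1.le _) m
  have hA := A_nonneg m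
  simp only [pow_zero, Nat.sub_self, mul_one]
  nlinarith [mul_nonneg hA hP]

lemma diff_mono (n : ℕ) (hn : 3 ≤ n) {r1 r2 : ℝ} (h0 : 0 ≤ r1) (h12 : r1 ≤ r2) (h2 : r2 ≤ 1) :
    hrf n r1 - grf n r1 ≤ hrf n r2 - grf n r2 := by
  rw [grf_eq n hn, grf_eq n hn]
  unfold hrf
  rw [← Summable.tsum_sub (summable_h n hn h0 (by linarith)) (summable_g n hn h0 (by linarith)),
    ← Summable.tsum_sub (summable_h n hn (by linarith) h2) (summable_g n hn (by linarith) h2)]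
  refine Summable.tsum_le_tsum (fun m => ?_)
    ((summable_h n hn h0 (by linarith)).sub (summable_g n hn h0 (by linarith)))
    ((summable_h n hn (by linarith) h2).sub (summable_g n hn (by linarith) h2))
  exact phi_mono n hn m ⟨h0, by linarith⟩ ⟨by linarith, h2⟩ h12

lemma abs_form (x y : ℝ) : ‖(x : ℂ) + (y : ℂ) * Complex.I‖
    = Real.sqrt (x^2 + y^2) := by
  rw [Complex.norm_def, Complex.normSq_add_mul_I]

lemma sqrt_key (n : ℕ) (hn : 3 ≤ n) {a b r1 r2 : ℝ} (ha : 0 < a) (hb : 0 ≤ b)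
    (h0 : 0 < r1) (h12 : r1 < r2) (h2 : r2 ≤ 1) :
    Real.sqrt ((a * (hrf n r1 + grf n r1))^2 + (b * (hrf n r1 - grf n r1))^2)
      < Real.sqrt ((a * (hrf n r2 + grf n r2))^2 + (b * (hrf n r2 - grf n r2))^2) := by
  have hhlt := hrf_lt n hn h0.le h12 h2
  have hgle := grf_le_mono n hn h0.le h12.le h2
  have hd0 : 0 ≤ hrf n r1 - grf n r1 := sub_nonneg.2 (grf_le_hrf n hn h0.le (by linarith))
  have hdm := diff_mono n hn h0.le h12.le h2
  have hsn1 : 0 ≤ hrf n r1 + grf n r1 :=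
    add_nonneg (hrf_nonneg n hn h0.le (by linarith)) (grf_nonneg n hn h0.le (by linarith))
  apply Real.sqrt_lt_sqrt (by positivity)
  have k1 : (a * (hrf n r1 + grf n r1))^2 < (a * (hrf n r2 + grf n r2))^2 := by
    apply pow_lt_pow_left₀ (by nlinarith) (by positivity) (by norm_num)
  have k2 : (b * (hrf n r1 - grf n r1))^2 ≤ (b * (hrf n r2 - grf n r2))^2 := by
    apply pow_le_pow_left₀ (by positivity) (by nlinarith) _
  linarith

theorem stmt_11 (n : ℕ) (hn : 3 ≤ n) (β : ℝ) :
    (∀ r ∈ Set.Ioo (0 : ℝ) 1,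
      HasDerivAt (fun r : ℝ => f n β (r : ℂ))
        ((((Real.cos (β / 2) * (1 + r ^ (n - 2)) : ℝ) : ℂ) +
            Complex.I * ((Real.sin (β / 2) * (1 - r ^ (n - 2)) : ℝ) : ℂ)) /
          ((Real.sqrt (1 - r ^ (2 * n)) : ℝ) : ℂ)) r ∧
      HasDerivAt (fun r : ℝ => f n β ((r : ℂ) * Complex.exp (Complex.I * ((π / n : ℝ) : ℂ))))
        (Complex.exp (Complex.I * ((π / n : ℝ) : ℂ)) *
          ((((Real.cos (β / 2) * (1 - r ^ (n - 2)) : ℝ) : ℂ) +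
              Complex.I * ((Real.sin (β / 2) * (1 + r ^ (n - 2)) : ℝ) : ℂ)) /
            ((Real.sqrt (1 - r ^ (2 * n)) : ℝ) : ℂ))) r) ∧
    (β ∈ Set.Ioc (0 : ℝ) (π / 2) →
      StrictMonoOn (fun r : ℝ => ‖f n β (r : ℂ)‖) (Set.Ioc 0 1) ∧
      StrictMonoOn
        (fun r : ℝ => ‖f n β ((r : ℂ) * Complex.exp (Complex.I * ((π / n : ℝ) : ℂ)))‖)
        (Set.Ioc 0 1)) := by
  constructor
  · intro r hr
    exact ⟨deriv_one_f n hn β hr.1.le hr.2,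
      deriv_rot' n hn β _ (w_pow_exp n hn) (w_conj_pow n hn) hr.1.le hr.2⟩
  · intro hβ
    have hβ1 : 0 < β := hβ.1
    have hβ2 : β ≤ π / 2 := hβ.2
    have hc : 0 < Real.cos (β / 2) := by
      apply Real.cos_pos_of_mem_Ioo
      constructor
      · have := Real.pi_pos; linarith
      · have := Real.pi_pos; linarith
    have hs : 0 < Real.sin (β / 2) := by
      apply Real.sin_pos_of_pos_of_lt_pi
      · linarith
      · have := Real.pi_pos; linarith
    have habsw : ‖Complex.exp (Complex.I * ((π/n : ℝ) : ℂ))‖ = 1 := by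
      rw [Complex.norm_exp]
      simp
    constructor
    · intro r1 hr1 r2 hr2 h12
      simp only
      rw [f_one n hn β r1, f_one n hn β r2, abs_form, abs_form]
      exact sqrt_key n hn hc hs.le hr1.1 h12 hr2.2
    · intro r1 hr1 r2 hr2 h12
      simp only
      rw [f_rot n hn β r1, f_rot n hn β r2, norm_mul, norm_mul, habsw, one_mul, one_mul,
        abs_form, abs_form]
      have hcomm : ∀ r : ℝ, (Real.cos (β/2) * (hrf n r - grf n r))^2
          + (Real.sin (β/2) * (hrf n r + grf n r))^2
          = (Real.sin (β/2) * (hrf n r + grf n r))^2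
          + (Real.cos (β/2) * (hrf n r - grf n r))^2 := fun r => by ring
      rw [hcomm r1, hcomm r2]
      exact sqrt_key n hn hs hc.le hr1.1 h12 hr2.2
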